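/- Let $R$ be a commutative ring, let $a : \{1,2,\dots\} \to R$ be a sequence, and let coefficients $p_{k,i} \in R$ ($1 \le i \le k$) be such that $a_{k+1} = \sum_{i=1}^k p_{k,i} a_i$ for every $k \ge 1$. Then for every $k \ge 1$, $a_{k+1} = a_1 \cdot \det M$, where $M$ is the $k \times k$ matrix over $R$ with entries $M_{i,j} = p_{j,i}$ for $i \le j$, $M_{j+1,j} = -1$ for $1 \le j \le k-1$, and $M_{i,j} = 0$ for $i > j+1$. -/

import Mathlib

open Finset Matrix

/-- **Theorem 1.1.** Let `R` be a commutative ring, `a` a sequence in `R` (indexed from 1),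
and `p k i` coefficients such that `a (k+1) = ∑_{i=1}^k p k i * a i` for all `k ≥ 1`.
Then `a (k+1) = a 1 * det M` where `M` is the `k × k` matrix with `M i j = p j i` for
`i ≤ j`, `M (j+1) j = -1`, and `0` below the subdiagonal (indices written 1-based). -/
theorem recurrence_det (R : Type*) [CommRing R] (a : ℕ → R) (p : ℕ → ℕ → R)
    (hrec : ∀ k ≥ 1, a (k + 1) = ∑ i ∈ Finset.Icc 1 k, p k i * a i) :
    ∀ k ≥ 1, a (k + 1) =
      a 1 * Matrix.det (Matrix.of (fun i j : Fin k =>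
        if (i : ℕ) ≤ (j : ℕ) then p ((j : ℕ) + 1) ((i : ℕ) + 1)
        else if (i : ℕ) = (j : ℕ) + 1 then -1
        else 0)) := by
  rintro k hk
  obtain ⟨n, rfl⟩ : ∃ n, k = n + 1 := ⟨k - 1, (Nat.succ_pred_eq_of_pos hk).symm⟩
  set M : Matrix (Fin (n+1)) (Fin (n+1)) R := Matrix.of (fun i j : Fin (n+1) =>
        if (i : ℕ) ≤ (j : ℕ) then p ((j : ℕ) + 1) ((i : ℕ) + 1)
        else if (i : ℕ) = (j : ℕ) + 1 then -1
        else 0) with hM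
  set u : Fin (n+1) → R := fun i => a (i + 1) with hu
  -- rewrite the recurrence as a range sum
  have hrec' : ∀ m, a (m + 2) = ∑ i ∈ range (m + 1), p (m + 1) (i + 1) * a (i + 1) := by
    intro m
    have := hrec (m + 1) (Nat.le_add_left 1 m)
    rw [this, show Icc 1 (m+1) = Ico 1 (m+2) by rfl, Finset.sum_Ico_eq_sum_range]
    simp [add_comm 1]
  have h1 : Matrix.vecMul u M = fun j : Fin (n+1) => if (j : ℕ) = n then a (n + 2) else 0 := by
    funext j
    have hsum : Matrix.vecMul u M j =
        ∑ i ∈ range (n + 1), a (i + 1) *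
          (if i ≤ (j : ℕ) then p ((j : ℕ) + 1) (i + 1)
           else if i = (j : ℕ) + 1 then -1 else 0) := by
      rw [Matrix.vecMul, dotProduct]
      rw [← Fin.sum_univ_eq_sum_range (fun i => a (i + 1) *
          (if i ≤ (j : ℕ) then p ((j : ℕ) + 1) (i + 1)
           else if i = (j : ℕ) + 1 then -1 else 0)) (n+1)]
      rfl
    rcases eq_or_lt_of_le (Fin.is_le j) with hj | hj
    · rw [hsum, if_pos hj]
      rw [hrec' n]
      refine Finset.sum_congr rfl fun i hi => ?_
      rw [mem_range] at hi
      rw [if_pos (by omega : i ≤ (j : ℕ)), hj, mul_comm]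
    · rw [hsum, if_neg (by omega)]
      have hsplit : (∑ i ∈ range ((j : ℕ) + 2), a (i + 1) *
            (if i ≤ (j : ℕ) then p ((j : ℕ) + 1) (i + 1)
             else if i = (j : ℕ) + 1 then -1 else 0)) +
          (∑ i ∈ Ico ((j : ℕ) + 2) (n + 1), a (i + 1) *
            (if i ≤ (j : ℕ) then p ((j : ℕ) + 1) (i + 1)
             else if i = (j : ℕ) + 1 then -1 else 0)) =
          ∑ i ∈ range (n + 1), a (i + 1) *
            (if i ≤ (j : ℕ) then p ((j : ℕ) + 1) (i + 1)
             else if i = (j : ℕ) + 1 then -1 else 0) :=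
        Finset.sum_range_add_sum_Ico _ (by omega)
      rw [← hsplit]
      have h2 : (∑ i ∈ Ico ((j : ℕ) + 2) (n + 1), a (i + 1) *
            (if i ≤ (j : ℕ) then p ((j : ℕ) + 1) (i + 1)
             else if i = (j : ℕ) + 1 then -1 else 0)) = 0 := by
        refine Finset.sum_eq_zero fun i hi => ?_
        rw [mem_Ico] at hi
        rw [if_neg (by omega), if_neg (by omega), mul_zero]
      rw [h2, add_zero, Finset.sum_range_succ, if_neg (by omega), if_pos rfl]
      have h3 : (∑ i ∈ range ((j : ℕ) + 1), a (i + 1) *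
            (if i ≤ (j : ℕ) then p ((j : ℕ) + 1) (i + 1)
             else if i = (j : ℕ) + 1 then -1 else 0)) = a ((j : ℕ) + 2) := by
        rw [hrec' (j : ℕ)]
        refine Finset.sum_congr rfl fun i hi => ?_
        rw [mem_range] at hi
        rw [if_pos (by omega), mul_comm]
      rw [h3]; ring
  -- the key adjugate entry
  have hadj : M.adjugate (Fin.last n) 0 = 1 := by
    rw [Matrix.adjugate_apply, Matrix.det_succ_row_zero]
    have hrow : ∀ j : Fin (n+1), (M.updateRow 0 (Pi.single (Fin.last n) 1)) 0 j
        = if j = Fin.last n then 1 else 0 := by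
      intro j
      rw [Matrix.updateRow_self]
      simp [Pi.single_apply]
    rw [Finset.sum_eq_single (Fin.last n)]
    · rw [hrow, if_pos rfl, mul_one]
      have hsub : ((M.updateRow 0 (Pi.single (Fin.last n) 1)).submatrix Fin.succ
          (Fin.last n).succAbove).det = (-1 : R) ^ n := by
        have hd : ∀ i j : Fin n, ((M.updateRow 0 (Pi.single (Fin.last n) 1)).submatrix Fin.succ
            (Fin.last n).succAbove) i j =
            (if (i : ℕ) + 1 ≤ (j : ℕ) then p ((j : ℕ) + 1) ((i : ℕ) + 1 + 1)
              else if (i : ℕ) + 1 = (j : ℕ) + 1 then -1 else 0) := by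
          intro i j
          rw [Matrix.submatrix_apply, Fin.succAbove_last, Matrix.updateRow_ne (Fin.succ_ne_zero i)]
          simp only [hM, Matrix.of_apply, Fin.val_succ, Fin.coe_castSucc]
        rw [Matrix.det_of_upperTriangular]
        · rw [Finset.prod_congr rfl fun i _ => by
            rw [hd i i, if_neg (by omega), if_pos rfl]]
          simp
        · intro i j hij
          have hij' : (j : ℕ) < (i : ℕ) := hij
          rw [hd i j, if_neg (by omega), if_neg (by omega)]
      rw [hsub, Fin.val_last, ← mul_pow]
      simp
    · intro j _ hj
      rw [hrow, if_neg hj, mul_zero, zero_mul]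
    · intro h; exact absurd (Finset.mem_univ _) h
  -- put it together
  have key := congrFun (congrArg (Matrix.vecMul u) (Matrix.mul_adjugate M)) 0
  rw [← Matrix.vecMul_vecMul, h1] at key
  have lhs : Matrix.vecMul (fun j : Fin (n+1) => if (j : ℕ) = n then a (n + 2) else 0) M.adjugate 0
      = a (n + 2) := by
    rw [Matrix.vecMul, dotProduct]
    rw [Finset.sum_eq_single (Fin.last n)]
    · rw [if_pos (Fin.val_last n), hadj, mul_one]
    · intro j _ hj
      have hj' : ¬ (j : ℕ) = n := fun h => hj (Fin.ext (by simpa using h))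
      rw [if_neg hj', zero_mul]
    · intro h; exact absurd (Finset.mem_univ _) h
  rw [lhs] at key
  have rhs : Matrix.vecMul u (M.det • (1 : Matrix (Fin (n+1)) (Fin (n+1)) R)) 0
      = M.det * a 1 := by
    rw [Matrix.vecMul, dotProduct]
    rw [Finset.sum_eq_single 0]
    · simp [hu, Matrix.one_apply, mul_comm]
    · intro j _ hj
      simp [Matrix.one_apply, hj]
    · intro h; exact absurd (Finset.mem_univ _) h
  rw [rhs] at key
  rw [show n + 1 + 1 = n + 2 from rfl, key, mul_comm]
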